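/- Let U be an irreducible almost upper triangular transition matrix on ℕ and, for each n, let ρ^{(n)} be an invariant probability distribution of the projection U^{(n)} of U onto {0,…,n} (extended by 0 to all of ℕ). Then for any ρ : ℕ → ℝ with ρ a ≥ 0 for all a and ∑_a ρ a = 1: ρ is an invariant measure for U (equivalently, U is positive recurrent with stationary distribution ρ) if and only if ρ^{(n)} a → ρ a as n → ∞ for every a ∈ ℕ. -/

import Mathlib

/-- Irreducibility of a matrix on `ℕ`. -/
def MatIrreducible (M : ℕ → ℕ → ℝ) : Prop :=
  ∀ i j : ℕ, ∃ (n : ℕ) (x : ℕ → ℕ), 0 < n ∧ x 0 = i ∧ x n = j ∧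
    ∀ k, k < n → 0 < M (x k) (x (k + 1))

/-- The projection `M^{(n)}` of `M` onto `{0,…,n}`. -/
noncomputable def projTM (M : ℕ → ℕ → ℝ) (n : ℕ) : ℕ → ℕ → ℝ :=
  fun i j =>
    if j < n then M i j
    else if j = n then (∑' k : ℕ, if n ≤ k then M i k else 0)
    else 0

lemma step_pos (U : ℕ → ℕ → ℝ) (hut : ∀ i j, j + 1 < i → U i j = 0)
    (hirr : MatIrreducible U) (b : ℕ) : 0 < U (b+1) b := by
  obtain ⟨n, x, hn, hx0, hxn, hstep⟩ := hirr (b+1) b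
  have hne : ((Finset.range n).filter (fun k => b < x k)).Nonempty :=
    ⟨0, by simp [hn, hx0]⟩
  set s := (Finset.range n).filter (fun k => b < x k) with hs
  set k := s.max' hne with hk
  have hks : k ∈ s := s.max'_mem hne
  obtain ⟨hkn, hbk⟩ : k < n ∧ b < x k := by simpa [hs] using hks
  have hnext : x (k+1) ≤ b := by
    rcases eq_or_lt_of_le (Nat.succ_le_of_lt hkn) with he | hlt
    · rw [show k + 1 = n from he, hxn]
    · by_contra hc
      push_neg at hc
      have hmem : k + 1 ∈ s := by simp [hs, hlt, hc]
      have := s.le_max' _ hmem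
      omega
  have hpos := hstep k hkn
  have hxk : ¬ (x (k+1) + 1 < x k) := fun hcon => by
    rw [hut _ _ hcon] at hpos; exact lt_irrefl 0 hpos
  have h1 : x k = b+1 := by omega
  have h2 : x (k+1) = b := by omega
  rw [← h1, ← h2]; exact hpos

lemma recDetAux (U : ℕ → ℕ → ℝ) (hd : ∀ b, U (b+1) b ≠ 0) (f g : ℕ → ℝ) (n : ℕ)
    (hf : ∀ b, b < n → ∑ a ∈ Finset.range (b+2), f a * U a b = f b)
    (hg : ∀ b, b < n → ∑ a ∈ Finset.range (b+2), g a * U a b = g b) :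
    ∀ a, a ≤ n → f a * g 0 = g a * f 0 := by
  intro a
  induction a using Nat.strong_induction_on with
  | _ a ih =>
    match a with
    | 0 => intro _; ring
    | b+1 =>
      intro hle
      have hb : b < n := lt_of_lt_of_le (Nat.lt_succ_self b) hle
      have hf' := hf b hb
      have hg' := hg b hb
      rw [Finset.sum_range_succ] at hf' hg'
      have ihb := ih b (Nat.lt_succ_self b) (by omega)
      have hAB : (∑ a ∈ Finset.range (b+1), f a * U a b) * g 0 =
          (∑ a ∈ Finset.range (b+1), g a * U a b) * f 0 := by
        rw [Finset.sum_mul, Finset.sum_mul]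
        apply Finset.sum_congr rfl
        intro a ha
        have h := ih a (Finset.mem_range.mp ha) (by
          have := Finset.mem_range.mp ha; omega)
        linear_combination (U a b) * h
      have key : f (b+1) * g 0 * U (b+1) b = g (b+1) * f 0 * U (b+1) b := by
        linear_combination g 0 * hf' - f 0 * hg' + ihb - hAB
      exact mul_right_cancel₀ (hd b) key

lemma recZeroAux (U : ℕ → ℕ → ℝ) (hd : ∀ b, U (b+1) b ≠ 0) (f : ℕ → ℝ) (n : ℕ)
    (hf : ∀ b, b < n → ∑ a ∈ Finset.range (b+2), f a * U a b = f b)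
    (h0 : f 0 = 0) : ∀ a, a ≤ n → f a = 0 := by
  intro a
  induction a using Nat.strong_induction_on with
  | _ a ih =>
    match a with
    | 0 => intro _; exact h0
    | b+1 =>
      intro hle
      have hb : b < n := lt_of_lt_of_le (Nat.lt_succ_self b) hle
      have hf' := hf b hb
      rw [Finset.sum_range_succ] at hf'
      have hz : ∑ a ∈ Finset.range (b+1), f a * U a b = 0 := by
        apply Finset.sum_eq_zero
        intro a ha
        rw [ih a (Finset.mem_range.mp ha)
          (by have := Finset.mem_range.mp ha; omega), zero_mul]
      have hfb : f b = 0 := ih b (Nat.lt_succ_self b) (by omega)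
      have : f (b+1) * U (b+1) b = 0 := by rw [hz, hfb] at hf'; linarith
      exact (mul_eq_zero.mp this).resolve_right (hd b)

/-- Theorem 2.7 (ii): a probability distribution `ρ` on `ℕ` is invariant for the
irreducible almost upper triangular transition matrix `U` (positive recurrence with
stationary distribution `ρ`) iff `ρ^{(n)} → ρ` pointwise, where `ρ^{(n)}` is the
invariant probability distribution of the projection `U^{(n)}` (extended by `0`). -/
theorem positive_recurrent_iff_projection_limit (U : ℕ → ℕ → ℝ)
    (hnn : ∀ i j, 0 ≤ U i j)
    (hrow : ∀ i, HasSum (fun j => U i j) 1)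
    (hut : ∀ i j, j + 1 < i → U i j = 0)
    (hirr : MatIrreducible U)
    (ρ : ℕ → ℕ → ℝ)
    (hρnn : ∀ n a, 0 ≤ ρ n a)
    (hρzero : ∀ n a, n < a → ρ n a = 0)
    (hρsum : ∀ n, ∑ a ∈ Finset.range (n + 1), ρ n a = 1)
    (hρinv : ∀ n, ∀ b ≤ n, ∑ a ∈ Finset.range (n + 1), ρ n a * projTM U n a b = ρ n b)
    (ρlim : ℕ → ℝ) (hρlimnn : ∀ a, 0 ≤ ρlim a) (hρlim1 : HasSum ρlim 1) :
    (∀ b, HasSum (fun a => ρlim a * U a b) (ρlim b)) ↔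
      ∀ a, Filter.Tendsto (fun n => ρ n a) Filter.atTop (nhds (ρlim a)) := by
  have hd : ∀ b, U (b+1) b ≠ 0 := fun b => ne_of_gt (step_pos U hut hirr b)
  -- local recursion for the projected invariant distributions
  have hloc : ∀ n, ∀ b, b < n → ∑ a ∈ Finset.range (b+2), ρ n a * U a b = ρ n b := by
    intro n b hb
    have h : ∑ a ∈ Finset.range (n+1), ρ n a * U a b = ρ n b := by
      rw [← hρinv n b hb.le]
      apply Finset.sum_congr rfl
      intro a _
      simp [projTM, hb]
    rw [← h]
    apply Finset.sum_subset
    · intro a ha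
      simp only [Finset.mem_range] at *
      omega
    · intro a ha hna
      simp only [Finset.mem_range] at ha hna
      rw [hut a b (by omega), mul_zero]
  have hρn0pos : ∀ n, 0 < ρ n 0 := by
    intro n
    rcases (hρnn n 0).lt_or_eq with h | h
    · exact h
    · exfalso
      have hz := recZeroAux U hd (ρ n) n (hloc n) h.symm
      have : ∑ a ∈ Finset.range (n+1), ρ n a = 0 := by
        apply Finset.sum_eq_zero
        intro a ha
        exact hz a (by simpa using Nat.lt_succ_iff.mp (Finset.mem_range.mp ha))
      rw [hρsum n] at this
      exact one_ne_zero this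
  constructor
  · -- forward direction
    intro hinv a
    have hfin : ∀ b, ∑ a ∈ Finset.range (b+2), ρlim a * U a b = ρlim b := by
      intro b
      have hz : ∀ c ∉ Finset.range (b+2), ρlim c * U c b = 0 := by
        intro c hc
        rw [hut c b (by simp at hc; omega), mul_zero]
      exact (hasSum_sum_of_ne_finset_zero hz).unique (hinv b)
    have hlim0pos : 0 < ρlim 0 := by
      rcases (hρlimnn 0).lt_or_eq with h | h
      · exact h
      · exfalso
        have hz : ∀ a, ρlim a = 0 := fun a =>
          recZeroAux U hd ρlim a (fun b _ => hfin b) h.symm a le_rfl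
        have : ρlim = 0 := funext hz
        rw [this] at hρlim1
        exact one_ne_zero (hρlim1.unique hasSum_zero)
    have hconsist : ∀ n, ∀ a, a ≤ n → ρlim a * ρ n 0 = ρ n a * ρlim 0 :=
      fun n => recDetAux U hd ρlim (ρ n) n (fun b _ => hfin b) (hloc n)
    set T : ℕ → ℝ := fun n => ∑ a ∈ Finset.range (n+1), ρlim a with hT
    have hTpos : ∀ n, 0 < T n := by
      intro n
      have : ρlim 0 ≤ T n :=
        Finset.single_le_sum (fun a _ => hρlimnn a) (by simp)
      linarith
    have hρna : ∀ n, ∀ a, a ≤ n → ρ n a = ρlim a / T n := by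
      intro n a ha
      have h1 : T n * ρ n 0 = ρlim 0 := by
        have h2 : ∑ a ∈ Finset.range (n+1), ρlim a * ρ n 0 =
            ∑ a ∈ Finset.range (n+1), ρ n a * ρlim 0 :=
          Finset.sum_congr rfl (fun a ha =>
            hconsist n a (Nat.lt_succ_iff.mp (Finset.mem_range.mp ha)))
        rw [← Finset.sum_mul, ← Finset.sum_mul, hρsum n, one_mul] at h2
        exact h2
      have h2 := hconsist n a ha
      have h3 : ρ n a * (T n * ρ n 0) = ρlim a * ρ n 0 := by
        rw [h1]; linarith
      have h4 : (ρ n a * T n) * ρ n 0 = ρlim a * ρ n 0 := by ring_nf; ring_nf at h3; exact h3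
      have h5 : ρ n a * T n = ρlim a := mul_right_cancel₀ (ne_of_gt (hρn0pos n)) h4
      rw [eq_div_iff (ne_of_gt (hTpos n))]
      exact h5
    have hTlim : Filter.Tendsto T Filter.atTop (nhds 1) := by
      have h1 := hρlim1.tendsto_sum_nat
      have h2 : Filter.Tendsto (fun n : ℕ => n + 1) Filter.atTop Filter.atTop :=
        Filter.tendsto_add_atTop_nat 1
      exact h1.comp h2
    have hq : Filter.Tendsto (fun n => ρlim a / T n) Filter.atTop (nhds (ρlim a)) := by
      have := Filter.Tendsto.div (tendsto_const_nhds (x := ρlim a)) hTlim one_ne_zero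
      rw [div_one] at this
      exact this
    apply hq.congr'
    filter_upwards [Filter.eventually_ge_atTop a] with n hn
    exact (hρna n a hn).symm
  · -- reverse direction
    intro h b
    have hconsist2 : ∀ n m, m ≤ n → ∀ a, a ≤ m → ρ n a * ρ m 0 = ρ m a * ρ n 0 :=
      fun n m hmn => recDetAux U hd (ρ n) (ρ m) m
        (fun b hb => hloc n b (lt_of_lt_of_le hb hmn)) (hloc m)
    set μ : ℕ → ℝ := fun a => ρ a a / ρ a 0 with hμ
    have hμrep : ∀ n a, a ≤ n → ρ n a = μ a * ρ n 0 := by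
      intro n a ha
      have h2 := hconsist2 n a ha a le_rfl
      have : μ a * ρ n 0 * ρ a 0 = ρ n a * ρ a 0 := by
        have hne : ρ a 0 ≠ 0 := ne_of_gt (hρn0pos a)
        simp only [hμ]
        field_simp
        linarith
      exact (mul_right_cancel₀ (ne_of_gt (hρn0pos a)) this).symm
    have hlim0 : Filter.Tendsto (fun n => ρ n 0) Filter.atTop (nhds (ρlim 0)) := h 0
    have hlima : ∀ a, ρlim a = μ a * ρlim 0 := by
      intro a
      have h1 : Filter.Tendsto (fun n => μ a * ρ n 0) Filter.atTop (nhds (μ a * ρlim 0)) :=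
        hlim0.const_mul _
      have h2 : Filter.Tendsto (fun n => ρ n a) Filter.atTop (nhds (μ a * ρlim 0)) := by
        apply h1.congr'
        filter_upwards [Filter.eventually_ge_atTop a] with n hn
        exact (hμrep n a hn).symm
      exact tendsto_nhds_unique (h a) h2
    have hlim0ne : ρlim 0 ≠ 0 := by
      intro h0
      have hz : ∀ a, ρlim a = 0 := fun a => by rw [hlima a, h0, mul_zero]
      have : ρlim = 0 := funext hz
      rw [this] at hρlim1
      exact one_ne_zero (hρlim1.unique hasSum_zero)
    have hμrec : ∀ b, ∑ a ∈ Finset.range (b+2), μ a * U a b = μ b := by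
      intro b
      have h1 := hloc (b+1) b (Nat.lt_succ_self b)
      have h2 : ∑ a ∈ Finset.range (b+2), μ a * ρ (b+1) 0 * U a b = μ b * ρ (b+1) 0 := by
        calc ∑ a ∈ Finset.range (b+2), μ a * ρ (b+1) 0 * U a b
            = ∑ a ∈ Finset.range (b+2), ρ (b+1) a * U a b := by
              apply Finset.sum_congr rfl
              intro a ha
              rw [← hμrep (b+1) a (Nat.lt_succ_iff.mp (Finset.mem_range.mp ha))]
          _ = ρ (b+1) b := h1
          _ = μ b * ρ (b+1) 0 := hμrep (b+1) b (Nat.le_succ b)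
      have h3 : (∑ a ∈ Finset.range (b+2), μ a * U a b) * ρ (b+1) 0 = μ b * ρ (b+1) 0 := by
        rw [Finset.sum_mul, ← h2]
        apply Finset.sum_congr rfl
        intro a _
        ring
      exact mul_right_cancel₀ (ne_of_gt (hρn0pos (b+1))) h3
    have hz : ∀ c ∉ Finset.range (b+2), ρlim c * U c b = 0 := by
      intro c hc
      rw [hut c b (by simp at hc; omega), mul_zero]
    have hs : HasSum (fun a => ρlim a * U a b) (∑ a ∈ Finset.range (b+2), ρlim a * U a b) :=
      hasSum_sum_of_ne_finset_zero hz
    have hval : ∑ a ∈ Finset.range (b+2), ρlim a * U a b = ρlim b := by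
      calc ∑ a ∈ Finset.range (b+2), ρlim a * U a b
          = ∑ a ∈ Finset.range (b+2), (μ a * U a b) * ρlim 0 := by
            apply Finset.sum_congr rfl
            intro a _
            rw [hlima a]; ring
        _ = (∑ a ∈ Finset.range (b+2), μ a * U a b) * ρlim 0 := by rw [Finset.sum_mul]
        _ = μ b * ρlim 0 := by rw [hμrec b]
        _ = ρlim b := (hlima b).symm
    rwa [hval] at hs
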